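/- For 0 < ρ < π/2, the integral ∫₀¹ (π − 2 cos ρ · arctan(√(1−u²)/(u cos ρ)) − 2 arcsin u) du equals 2(sin ρ − ρ cos ρ)/sin ρ. -/

import Mathlib

open Real MeasureTheory Set Filter Topology

set_option maxHeartbeats 2000000 in
/-- For 0 < ρ < π/2,
`∫₀¹ (π − 2 cos ρ · arctan(√(1−u²)/(u cos ρ)) − 2 arcsin u) du = 2(sin ρ − ρ cos ρ)/sin ρ`. -/
theorem integral_identity (ρ : ℝ) (h0 : 0 < ρ) (h1 : ρ < π / 2) :
    ∫ u in (0:ℝ)..1,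
        (π - 2 * Real.cos ρ * Real.arctan (Real.sqrt (1 - u ^ 2) / (u * Real.cos ρ))
          - 2 * Real.arcsin u)
      = 2 * (Real.sin ρ - ρ * Real.cos ρ) / Real.sin ρ := by
  have hc : 0 < Real.cos ρ := Real.cos_pos_of_mem_Ioo ⟨by linarith [Real.pi_pos], h1⟩
  have hs : 0 < Real.sin ρ := Real.sin_pos_of_pos_of_lt_pi h0 (by linarith [Real.pi_pos])
  set c := Real.cos ρ with hcdef
  set s := Real.sin ρ with hsdef
  have hcs : s ^ 2 + c ^ 2 = 1 := Real.sin_sq_add_cos_sq ρ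
  set F : ℝ → ℝ := fun u => π * u - 2*c*(u * Real.arctan (Real.sqrt (1 - u ^ 2) / (u * c)))
      + (2*c/s) * Real.arctan (s * Real.sqrt (1 - u ^ 2) / c)
      - 2*(u * Real.arcsin u) - 2 * Real.sqrt (1 - u ^ 2) with hFdef
  -- derivative on the interior
  have hderiv : ∀ x ∈ Ioo (0:ℝ) 1, HasDerivAt F
      (π - 2 * c * Real.arctan (Real.sqrt (1 - x ^ 2) / (x * c)) - 2 * Real.arcsin x) x := by
    rintro x ⟨hx0, hx1⟩
    have h1x2 : 0 < 1 - x ^ 2 := by nlinarith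
    have ht : 0 < Real.sqrt (1 - x ^ 2) := Real.sqrt_pos.mpr h1x2
    have ht2 : Real.sqrt (1 - x ^ 2) ^ 2 = 1 - x ^ 2 := Real.sq_sqrt h1x2.le
    have hxc : x * c ≠ 0 := by positivity
    have hsq : HasDerivAt (fun u : ℝ => 1 - u ^ 2) (-(2 * x)) x := by
      simpa using ((hasDerivAt_pow 2 x).const_sub 1)
    have hsqrt : HasDerivAt (fun u : ℝ => Real.sqrt (1 - u ^ 2))
        (-(2 * x) / (2 * Real.sqrt (1 - x ^ 2))) x := hsq.sqrt h1x2.ne'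
    have hden : HasDerivAt (fun u : ℝ => u * c) c x := by
      simpa using (hasDerivAt_id x).mul_const c
    have hq : HasDerivAt (fun u : ℝ => Real.sqrt (1 - u ^ 2) / (u * c))
        ((-(2 * x) / (2 * Real.sqrt (1 - x ^ 2)) * (x * c) - Real.sqrt (1 - x ^ 2) * c) /
          (x * c) ^ 2) x := hsqrt.div hden hxc
    have harc1 := hq.arctan
    have hterm1 := (hasDerivAt_id x).mul harc1
    have harc2 := ((hsqrt.const_mul s).div_const c).arctan
    have harcsin : HasDerivAt Real.arcsin (1 / Real.sqrt (1 - x ^ 2)) x :=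
      Real.hasDerivAt_arcsin (by linarith) (by linarith)
    have htermsin := (hasDerivAt_id x).mul harcsin
    have hF : HasDerivAt F
        (π * 1 - 2*c*((1 : ℝ) * Real.arctan (Real.sqrt (1 - x ^ 2) / (x * c)) +
            x * (1 / (1 + (Real.sqrt (1 - x ^ 2) / (x * c)) ^ 2) *
              ((-(2 * x) / (2 * Real.sqrt (1 - x ^ 2)) * (x * c) - Real.sqrt (1 - x ^ 2) * c) /
                (x * c) ^ 2)))
          + (2*c/s) * (1 / (1 + (s * Real.sqrt (1 - x ^ 2) / c) ^ 2) *
              (s * (-(2 * x) / (2 * Real.sqrt (1 - x ^ 2))) / c))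
          - 2*((1 : ℝ) * Real.arcsin x + x * (1 / Real.sqrt (1 - x ^ 2)))
          - 2 * (-(2 * x) / (2 * Real.sqrt (1 - x ^ 2)))) x := by
      exact (((((hasDerivAt_id x).const_mul π).sub (hterm1.const_mul (2*c))).add
        (harc2.const_mul (2*c/s))).sub (htermsin.const_mul 2)).sub (hsqrt.const_mul 2)
    convert hF using 1
    generalize Real.sqrt (1 - x ^ 2) = t at ht ht2 ⊢
    generalize Real.arctan (t / (x * c)) = A
    have h1' : (1 + (t/(x*c))^2) = (1 - s^2*x^2)/(x*c)^2 := by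
      field_simp
      nlinarith [sq_nonneg x, sq_nonneg t]
    have h2' : (1 + (s*t/c)^2) = (1 - s^2*x^2)/c^2 := by
      field_simp
      nlinarith
    have hpos : (0:ℝ) < 1 - s^2*x^2 := by nlinarith [sq_nonneg (s*x)]
    rw [h1', h2']
    field_simp
    ring_nf
    linear_combination (- 2*c^2*x*(1-s^2*x^2)⁻¹) * ht2
  -- integrability of the integrand
  have hint : IntervalIntegrable
      (fun u => π - 2 * c * Real.arctan (Real.sqrt (1 - u ^ 2) / (u * c)) - 2 * Real.arcsin u)
      volume 0 1 := by
    rw [intervalIntegrable_iff]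
    apply Measure.integrableOn_of_bounded (M := 3 * π) (by simp)
    · apply Measurable.aestronglyMeasurable
      apply Measurable.sub
      apply Measurable.sub measurable_const
      · exact (Real.measurable_arctan.comp
          ((Real.continuous_sqrt.measurable.comp (by fun_prop)).div (by fun_prop))).const_mul _
      · exact Real.measurable_arcsin.const_mul 2
    · filter_upwards with u
      have hA1 := Real.arctan_lt_pi_div_two (Real.sqrt (1 - u ^ 2) / (u * c))
      have hA2 := Real.neg_pi_div_two_lt_arctan (Real.sqrt (1 - u ^ 2) / (u * c))
      have hB1 := Real.arcsin_le_pi_div_two u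
      have hB2 := Real.neg_pi_div_two_le_arcsin u
      have hc1 : c ≤ 1 := Real.cos_le_one ρ
      rw [Real.norm_eq_abs, abs_le]
      constructor <;> nlinarith [Real.pi_pos]
  -- limit at 0 from the right
  have ha : Tendsto F (𝓝[>] (0:ℝ)) (𝓝 (2 * c * ρ / s - 2)) := by
    have t1 : Tendsto (fun u : ℝ => π * u) (𝓝[>] (0:ℝ)) (𝓝 0) := by
      have hcont : Continuous fun u : ℝ => π * u := by fun_prop
      simpa using (hcont.tendsto 0).mono_left (nhdsWithin_le_nhds (a := (0:ℝ)) (s := Ioi (0:ℝ)))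
    have hH0 : Tendsto (fun u : ℝ => u * Real.arctan (Real.sqrt (1 - u ^ 2) / (u * c)))
        (𝓝[>] (0:ℝ)) (𝓝 0) := by
      apply squeeze_zero' (g := fun u : ℝ => u * (π / 2))
      · filter_upwards [self_mem_nhdsWithin] with u hu
        refine mul_nonneg (le_of_lt hu) ?_
        have := Real.arctan_strictMono.monotone
          (show (0:ℝ) ≤ Real.sqrt (1 - u ^ 2) / (u * c) from
            div_nonneg (Real.sqrt_nonneg _) (mul_nonneg (le_of_lt hu) hc.le))
        simpa [Real.arctan_zero] using this
      · filter_upwards [self_mem_nhdsWithin] with u hu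
        exact mul_le_mul_of_nonneg_left
          (Real.arctan_lt_pi_div_two _).le (le_of_lt hu)
      · have hcont : Continuous fun u : ℝ => u * (π / 2) := by fun_prop
        simpa using (hcont.tendsto 0).mono_left (nhdsWithin_le_nhds (a := (0:ℝ)) (s := Ioi (0:ℝ)))
    have hH : Tendsto (fun u : ℝ => 2*c*(u * Real.arctan (Real.sqrt (1 - u ^ 2) / (u * c))))
        (𝓝[>] (0:ℝ)) (𝓝 0) := by
      simpa using hH0.const_mul (2*c)
    have t3 : Tendsto (fun u : ℝ => (2*c/s) * Real.arctan (s * Real.sqrt (1 - u ^ 2) / c))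
        (𝓝[>] (0:ℝ)) (𝓝 (2 * c * ρ / s)) := by
      have hcont : Continuous fun u : ℝ => (2*c/s) * Real.arctan (s * Real.sqrt (1 - u ^ 2) / c) :=
        continuous_const.mul (Real.continuous_arctan.comp
          ((continuous_const.mul (Real.continuous_sqrt.comp (continuous_const.sub (continuous_pow 2)))).div_const c))
      have := (hcont.tendsto 0).mono_left (nhdsWithin_le_nhds (a := (0:ℝ)) (s := Ioi (0:ℝ)))
      convert this using 2
      have : Real.arctan (s * Real.sqrt (1 - (0:ℝ) ^ 2) / c) = ρ := by
        rw [show (1 - (0:ℝ)^2) = 1 by norm_num, Real.sqrt_one, mul_one,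
          ← Real.tan_eq_sin_div_cos, Real.arctan_tan (by linarith [Real.pi_pos]) h1]
      rw [this]; ring
    have t4 : Tendsto (fun u : ℝ => 2*(u * Real.arcsin u)) (𝓝[>] (0:ℝ)) (𝓝 0) := by
      have hcont : Continuous fun u : ℝ => 2*(u * Real.arcsin u) :=
        continuous_const.mul (continuous_id.mul Real.continuous_arcsin)
      have := (hcont.tendsto 0).mono_left (nhdsWithin_le_nhds (a := (0:ℝ)) (s := Ioi (0:ℝ)))
      simpa using this
    have t5 : Tendsto (fun u : ℝ => 2 * Real.sqrt (1 - u ^ 2)) (𝓝[>] (0:ℝ)) (𝓝 2) := by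
      have hcont : Continuous fun u : ℝ => 2 * Real.sqrt (1 - u ^ 2) :=
        continuous_const.mul (Real.continuous_sqrt.comp (continuous_const.sub (continuous_pow 2)))
      have := (hcont.tendsto 0).mono_left (nhdsWithin_le_nhds (a := (0:ℝ)) (s := Ioi (0:ℝ)))
      simpa using this
    have := ((((t1.sub hH).add t3).sub t4).sub t5)
    simpa using this
  -- limit at 1 from the left
  have hb : Tendsto F (𝓝[<] (1:ℝ)) (𝓝 0) := by
    have hcont1 : ContinuousAt (fun u : ℝ => Real.sqrt (1 - u ^ 2) / (u * c)) 1 := by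
      apply ContinuousAt.div
      · exact (Real.continuous_sqrt.comp (continuous_const.sub (continuous_pow 2))).continuousAt
      · fun_prop
      · simp [hc.ne']
    have c1 : ContinuousAt (fun u : ℝ => π * u) 1 := by fun_prop
    have c2 : ContinuousAt
        (fun u : ℝ => 2*c*(u * Real.arctan (Real.sqrt (1 - u ^ 2) / (u * c)))) 1 :=
      continuousAt_const.mul (continuousAt_id.mul
        (Real.continuous_arctan.continuousAt.comp hcont1))
    have c3 : ContinuousAt (fun u : ℝ => (2*c/s) * Real.arctan (s * Real.sqrt (1 - u ^ 2) / c)) 1 :=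
      (continuous_const.mul (Real.continuous_arctan.comp
        ((continuous_const.mul (Real.continuous_sqrt.comp (continuous_const.sub (continuous_pow 2)))).div_const c))).continuousAt
    have c4 : ContinuousAt (fun u : ℝ => 2*(u * Real.arcsin u)) 1 :=
      (continuous_const.mul (continuous_id.mul Real.continuous_arcsin)).continuousAt
    have c5 : ContinuousAt (fun u : ℝ => 2 * Real.sqrt (1 - u ^ 2)) 1 :=
      (continuous_const.mul (Real.continuous_sqrt.comp (continuous_const.sub (continuous_pow 2)))).continuousAt
    have hcontF : ContinuousAt F 1 := ((((c1.sub c2).add c3).sub c4).sub c5)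
    have := hcontF.tendsto.mono_left (nhdsWithin_le_nhds (a := (1:ℝ)) (s := Iio (1:ℝ)))
    have hF1 : F 1 = 0 := by
      simp only [hFdef]
      norm_num [Real.arcsin_one]
      ring
    rwa [hF1] at this
  have key := intervalIntegral.integral_eq_sub_of_hasDerivAt_of_tendsto one_pos hderiv hint ha hb
  rw [key]
  field_simp
  ring
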